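/- Let two groups A and B have counts (P_A, N_A) and (P_B, N_B), all positive, with unequal base rates P_A/N_A ≠ P_B/N_B. Suppose a classifier satisfies both Accuracy Parity and Equalized Odds (shared TPR, FPR ∈ [0,1]). Then its accuracy on both groups equals TPR, and also equals 1 − FPR. -/

import Mathlib

theorem unequal_base_rates_force_random_accuracy
    (TPR FPR PA NA PB NB : ℝ)
    (hTPR : 0 ≤ TPR ∧ TPR ≤ 1) (hFPR : 0 ≤ FPR ∧ FPR ≤ 1)
    (hPA : 0 < PA) (hNA : 0 < NA) (hPB : 0 < PB) (hNB : 0 < NB)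
    (hbase : PA / NA ≠ PB / NB)
    (hAP : (TPR * PA + (1 - FPR) * NA) / (PA + NA)
         = (TPR * PB + (1 - FPR) * NB) / (PB + NB)) :
    (TPR * PA + (1 - FPR) * NA) / (PA + NA) = TPR ∧
    (TPR * PB + (1 - FPR) * NB) / (PB + NB) = TPR ∧
    (TPR * PA + (1 - FPR) * NA) / (PA + NA) = 1 - FPR := by
  have hA : (0:ℝ) < PA + NA := by linarith
  have hB : (0:ℝ) < PB + NB := by linarith
  have hcross : PA * NB ≠ PB * NA := by
    intro h
    apply hbase
    field_simp
    linarith [h]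
  have key : TPR = 1 - FPR := by
    have h := hAP
    rw [div_eq_div_iff hA.ne' hB.ne'] at h
    have : (TPR - (1 - FPR)) * (PA * NB - PB * NA) = 0 := by ring_nf; nlinarith [h]
    rcases mul_eq_zero.mp this with h1 | h2
    · linarith
    · exact absurd (by linarith : PA * NB = PB * NA) hcross
  have eA : (TPR * PA + (1 - FPR) * NA) / (PA + NA) = TPR := by
    rw [← key]; field_simp
  have eB : (TPR * PB + (1 - FPR) * NB) / (PB + NB) = TPR := by
    rw [← key]; field_simp
  exact ⟨eA, eB, eA.trans key⟩
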